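/- For d ≥ 2 and α = 0, the function g(r) = σ_{d-1} ∫_0^π cos θ sin^{d-2}θ (r²+1−2r cos θ)^{−(d−2)/2} dθ is linear on (−1,1): g(r) = r·((d−2)/d)·σ_d for all r ∈ (−1,1). -/

import Mathlib

open Real intervalIntegral MeasureTheory Set

lemma aux_Qpos {r : ℝ} (h1 : -1 < r) (h2 : r < 1) (θ : ℝ) :
    0 < r ^ 2 + 1 - 2 * r * Real.cos θ := by
  rcases eq_or_ne (Real.cos θ) r with h | h
  · rw [h]; nlinarith
  · have h0 : 0 < (Real.cos θ - r) ^ 2 := by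
      have : Real.cos θ - r ≠ 0 := sub_ne_zero.mpr h
      positivity
    nlinarith [Real.sin_sq_add_cos_sq θ, sq_nonneg (Real.sin θ)]

lemma aux_pow_neg_half {q : ℝ} (hq : 0 < q) (n : ℕ) :
    (q ^ (-(1:ℝ)/2)) ^ n = q ^ (-(n:ℝ)/2) := by
  rw [← Real.rpow_natCast (q ^ (-(1:ℝ)/2)) n, ← Real.rpow_mul hq.le]
  congr 1; ring

lemma aux_sq_rpow_neg_half {y : ℝ} (hy : 0 < y) :
    (y ^ 2) ^ (-(1:ℝ)/2) = y⁻¹ := by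
  rw [← Real.rpow_natCast y 2, ← Real.rpow_mul hy.le, ← Real.rpow_neg_one]
  norm_num

lemma aux_wallis (n : ℕ) :
    (∫ θ in (0:ℝ)..π, Real.sin θ ^ n)
      = Real.sqrt π * Real.Gamma (((n:ℝ) + 1) / 2) / Real.Gamma ((n:ℝ) / 2 + 1) := by
  induction n using Nat.twoStepInduction with
  | zero =>
    simp only [pow_zero, integral_one, Nat.cast_zero, sub_zero]
    rw [show ((0:ℝ)+1)/2 = 1/2 by norm_num, show (0:ℝ)/2+1 = 1 by norm_num,
      Real.Gamma_one_half_eq, Real.Gamma_one, div_one]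
    exact (Real.mul_self_sqrt Real.pi_pos.le).symm
  | one =>
    simp only [pow_one, integral_sin, Real.cos_zero, Real.cos_pi, Nat.cast_one]
    rw [show ((1:ℝ)+1)/2 = 1 by norm_num, Real.Gamma_one,
      show ((1:ℝ))/2 + 1 = 1/2 + 1 by norm_num, Real.Gamma_add_one (by norm_num : (1:ℝ)/2 ≠ 0),
      Real.Gamma_one_half_eq]
    have : Real.sqrt π ≠ 0 := by positivity
    field_simp
    norm_num
  | more n ih _ =>
    rw [integral_sin_pow n, ih]
    simp only [Real.sin_zero, Real.sin_pi]
    have h1 : ((n:ℝ) + 2) / 2 + 1 = ((n:ℝ)/2 + 1) + 1 := by ring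
    have h2 : (((n:ℝ) + 2) + 1) / 2 = (((n:ℝ) + 1)/2) + 1 := by ring
    push_cast
    rw [h1, h2, Real.Gamma_add_one (by positivity : ((n:ℝ)+1)/2 ≠ 0),
      Real.Gamma_add_one (by positivity : ((n:ℝ)/2 + 1) ≠ 0)]
    have g1 : 0 < Real.Gamma (((n:ℝ) + 1) / 2) := Real.Gamma_pos_of_pos (by positivity)
    have g2 : 0 < Real.Gamma ((n:ℝ)/2 + 1) := Real.Gamma_pos_of_pos (by positivity)
    have hn2 : ((n:ℝ) + 2) ≠ 0 := by positivity
    field_simp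
    ring

set_option maxHeartbeats 2000000 in
lemma aux_key (d : ℕ) {r : ℝ} (h1 : -1 < r) (h2 : r < 1) :
    (∫ θ in (0:ℝ)..π, Real.sin θ ^ d * (r ^ 2 + 1 - 2 * r * Real.cos θ) ^ (-(d:ℝ)/2))
      = ∫ t in (0:ℝ)..π, Real.sin t ^ d := by
  set Q : ℝ → ℝ := fun θ => r ^ 2 + 1 - 2 * r * Real.cos θ with hQdef
  have hQ : ∀ θ, 0 < Q θ := fun θ => aux_Qpos h1 h2 θ
  set P : ℝ → ℝ := fun θ => (Q θ) ^ (-(1:ℝ)/2) with hPdef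
  have hP : ∀ θ, 0 < P θ := fun θ => Real.rpow_pos_of_pos (hQ θ) _
  have hPQ : ∀ θ, (P θ) ^ 2 * Q θ = 1 := by
    intro θ
    rw [hPdef]
    rw [aux_pow_neg_half (hQ θ) 2]
    rw [show (-(2:ℕ):ℝ)/2 = -1 by norm_num]
    rw [Real.rpow_neg_one]
    exact inv_mul_cancel₀ (hQ θ).ne'
  have hr1 : ∀ θ, r * Real.cos θ < 1 := by
    intro θ
    calc r * Real.cos θ ≤ |r * Real.cos θ| := le_abs_self _
    _ = |r| * |Real.cos θ| := abs_mul _ _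
    _ ≤ |r| * 1 := by
        exact mul_le_mul_of_nonneg_left (Real.abs_cos_le_one θ) (abs_nonneg r)
    _ < 1 := by rw [mul_one]; exact abs_lt.mpr ⟨h1, h2⟩
  -- w bounded
  have hsinsq : ∀ θ, Real.sin θ ^ 2 ≤ Q θ := by
    intro θ
    have := Real.sin_sq_add_cos_sq θ
    simp only [hQdef]
    nlinarith [sq_nonneg (Real.cos θ - r)]
  have hwsq : ∀ θ, (Real.sin θ * P θ) ^ 2 ≤ 1 := by
    intro θ
    have := hPQ θ
    have h := hsinsq θ
    have hp2 : 0 ≤ (P θ)^2 := sq_nonneg _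
    calc (Real.sin θ * P θ) ^ 2 = Real.sin θ ^ 2 * (P θ)^2 := by ring
    _ ≤ Q θ * (P θ)^2 := mul_le_mul_of_nonneg_right h hp2
    _ = 1 := by rw [mul_comm]; exact hPQ θ
  -- the function G
  set g0 : ℝ → ℝ := fun t => t ^ d * (1 - r ^ 2 * t ^ 2) ^ (-(1:ℝ)/2) with hg0def
  have hg0pos : ∀ t : ℝ, t ^ 2 ≤ 1 → 0 < 1 - r ^ 2 * t ^ 2 := by
    intro t ht; nlinarith [sq_nonneg r, sq_nonneg t]
  have hg0cont' : ∀ t : ℝ, 0 < 1 - r ^ 2 * t ^ 2 → ContinuousAt g0 t := by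
    intro t ht
    exact (continuousAt_pow t d).mul
      ((((continuousAt_const).sub ((continuousAt_pow t 2).const_mul _)).rpow_const
        (Or.inl ht.ne')))
  have hg0cont : ∀ t : ℝ, t ^ 2 ≤ 1 → ContinuousAt g0 t := fun t ht =>
    hg0cont' t (hg0pos t ht)
  have hsopen : IsOpen {t : ℝ | 0 < 1 - r ^ 2 * t ^ 2} :=
    isOpen_lt continuous_const (by fun_prop)
  set G : ℝ → ℝ := fun u => ∫ t in (0:ℝ)..u, g0 t with hGdef
  have hGderiv : ∀ u : ℝ, u ^ 2 ≤ 1 → HasDerivAt G (g0 u) u := by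
    intro u hu
    apply intervalIntegral.integral_hasDerivAt_right
    · apply ContinuousOn.intervalIntegrable
      intro t ht
      have ht2 : t ^ 2 ≤ 1 := by
        rcases Set.mem_uIcc.mp ht with ⟨ha, hb⟩ | ⟨ha, hb⟩
        · nlinarith
        · nlinarith
      exact (hg0cont t ht2).continuousWithinAt
    · exact ContinuousAt.stronglyMeasurableAtFilter hsopen
        (fun x hx => hg0cont' x hx) u (hg0pos u hu)
    · exact hg0cont u hu
  -- the function S
  set S : ℝ → ℝ := fun u => ∫ t in (0:ℝ)..u, Real.sin t ^ d with hSdef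
  have hSderiv : ∀ u : ℝ, HasDerivAt S (Real.sin u ^ d) u := by
    intro u
    apply intervalIntegral.integral_hasDerivAt_right
    · exact (Real.continuous_sin.pow d).intervalIntegrable _ _
    · exact (Real.continuous_sin.pow d).stronglyMeasurableAtFilter _ _
    · exact (Real.continuous_sin.pow d).continuousAt
  have hScont : Continuous S := continuous_iff_continuousAt.mpr fun u => (hSderiv u).continuousAt
  -- the antiderivative
  set F : ℝ → ℝ := fun θ =>
    S (Real.arccos ((Real.cos θ - r) * P θ)) - r * G (Real.sin θ * P θ) with hFdef
  -- derivative of Q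
  have hQ' : ∀ θ, HasDerivAt Q (2 * r * Real.sin θ) θ := by
    intro θ
    have h := ((Real.hasDerivAt_cos θ).const_mul (2 * r)).const_sub (r ^ 2 + 1)
    simpa using h.congr_deriv (by ring)
  have hP' : ∀ θ, HasDerivAt P (-(r * Real.sin θ * (P θ)^3)) θ := by
    intro θ
    have h := (hQ' θ).rpow_const (p := -(1:ℝ)/2) (Or.inl (hQ θ).ne')
    refine h.congr_deriv ?_
    rw [show (-(1:ℝ)/2 - 1) = -((3:ℕ):ℝ)/2 by norm_num,
      ← aux_pow_neg_half (hQ θ) 3]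
    ring
  -- continuity of F on [0, π]
  have hQc : Continuous Q := by fun_prop
  have hPc : Continuous P := continuous_iff_continuousAt.mpr fun θ =>
    (hQc.continuousAt).rpow_const (Or.inl (hQ θ).ne')
  have hVc : Continuous fun θ => (Real.cos θ - r) * P θ :=
    (Real.continuous_cos.sub continuous_const).mul hPc
  have hWc : Continuous fun θ => Real.sin θ * P θ := Real.continuous_sin.mul hPc
  have hGcomp : ContinuousOn (fun θ => G (Real.sin θ * P θ)) (Set.Icc 0 π) :=
    fun θ _ => (hGderiv _ (hwsq θ)).continuousAt.comp_continuousWithinAt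
      (f := fun θ => Real.sin θ * P θ) hWc.continuousWithinAt
  have hFcont : ContinuousOn F (Set.Icc 0 π) :=
    (hScont.comp (Real.continuous_arccos.comp hVc)).continuousOn.sub
      (continuousOn_const.mul hGcomp)
  have hqe : ∀ θ, Q θ = r ^ 2 + 1 - 2 * r * Real.cos θ := fun θ => rfl
  have hFderiv : ∀ θ ∈ Set.Ioo (0:ℝ) π,
      HasDerivAt F (Real.sin θ ^ d * (Q θ) ^ (-(d:ℝ)/2)) θ := by
    intro θ hθ
    obtain ⟨hθ0, hθπ⟩ := hθ
    have hs : 0 < Real.sin θ := Real.sin_pos_of_pos_of_lt_pi hθ0 hθπ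
    have hq := hQ θ
    have hp := hP θ
    have hpq := hPQ θ
    have hrc : r * Real.cos θ < 1 := hr1 θ
    have h1mrc : (0:ℝ) < 1 - r * Real.cos θ := by linarith
    have hcs := Real.sin_sq_add_cos_sq θ
    have hqeθ := hqe θ
    have hv2 : ((Real.cos θ - r) * P θ) ^ 2 = 1 - (Real.sin θ * P θ) ^ 2 := by
      linear_combination hpq + (P θ)^2 * hcs - (P θ)^2 * hqeθ
    have hvsq : ((Real.cos θ - r) * P θ) ^ 2 < 1 := by
      rw [hv2]
      nlinarith [mul_pos hs hp]
    have hvne1 : (Real.cos θ - r) * P θ ≠ 1 := by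
      intro h; rw [h] at hvsq; norm_num at hvsq
    have hvnem1 : (Real.cos θ - r) * P θ ≠ -1 := by
      intro h; rw [h] at hvsq; norm_num at hvsq
    have hsqrt : Real.sqrt (1 - ((Real.cos θ - r) * P θ) ^ 2) = Real.sin θ * P θ := by
      rw [show 1 - ((Real.cos θ - r) * P θ) ^ 2 = (Real.sin θ * P θ)^2 by
        linear_combination -hv2]
      exact Real.sqrt_sq (mul_pos hs hp).le
    -- derivative of v
    have hv' : HasDerivAt (fun θ => (Real.cos θ - r) * P θ)
        (-(Real.sin θ * (1 - r * Real.cos θ) * (P θ)^3)) θ := by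
      have h := ((Real.hasDerivAt_cos θ).sub_const r).mul (hP' θ)
      refine h.congr_deriv ?_
      linear_combination (Real.sin θ * P θ) * hpq - (Real.sin θ * (P θ)^3) * hqeθ
    -- derivative of arccos ∘ v
    have harccosv : HasDerivAt (fun θ => Real.arccos ((Real.cos θ - r) * P θ))
        ((1 - r * Real.cos θ) * (P θ)^2) θ := by
      have h := (Real.hasDerivAt_arccos hvnem1 hvne1).comp θ hv'
      refine h.congr_deriv ?_
      rw [hsqrt]
      field_simp
    -- derivative of S ∘ arccos ∘ v
    have hSv : HasDerivAt (fun θ => S (Real.arccos ((Real.cos θ - r) * P θ)))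
        (Real.sin θ ^ d * (P θ)^d * ((1 - r * Real.cos θ) * (P θ)^2)) θ := by
      have h := (hSderiv (Real.arccos ((Real.cos θ - r) * P θ))).comp θ harccosv
      refine h.congr_deriv ?_
      rw [Real.sin_arccos, hsqrt, mul_pow]
    -- derivative of w
    have hw' : HasDerivAt (fun θ => Real.sin θ * P θ)
        ((Real.cos θ - r) * (1 - r * Real.cos θ) * (P θ)^3) θ := by
      have h := (Real.hasDerivAt_sin θ).mul (hP' θ)
      refine h.congr_deriv ?_
      linear_combination (-(Real.cos θ * P θ)) * hpq + (-(r * (P θ)^3)) * hcs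
        + (-(Real.cos θ * (P θ)^3)) * hqeθ
    -- value of g0 at w
    have hgw : g0 (Real.sin θ * P θ)
        = Real.sin θ ^ d * (P θ)^d * (P θ * (1 - r * Real.cos θ))⁻¹ := by
      have h2 : 1 - r ^ 2 * (Real.sin θ * P θ) ^ 2 = (P θ * (1 - r * Real.cos θ))^2 := by
        linear_combination -hpq + (P θ)^2 * hqeθ - (r^2 * (P θ)^2) * hcs
      simp only [hg0def]
      rw [h2, aux_sq_rpow_neg_half (mul_pos hp h1mrc), mul_pow]
    -- derivative of G ∘ w
    have hGw : HasDerivAt (fun θ => G (Real.sin θ * P θ))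
        (Real.sin θ ^ d * (P θ)^d * (P θ * (1 - r * Real.cos θ))⁻¹
          * ((Real.cos θ - r) * (1 - r * Real.cos θ) * (P θ)^3)) θ := by
      have h := (hGderiv (Real.sin θ * P θ) (hwsq θ)).comp θ hw'
      refine h.congr_deriv ?_
      rw [hgw]
    -- assemble
    have htot := hSv.sub (hGw.const_mul r)
    refine htot.congr_deriv ?_
    have hinv : (P θ * (1 - r * Real.cos θ))⁻¹ * ((Real.cos θ - r) * (1 - r * Real.cos θ) * (P θ)^3)
        = (Real.cos θ - r) * (P θ)^2 := by
      field_simp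
    rw [← aux_pow_neg_half hq d]
    calc Real.sin θ ^ d * (P θ)^d * ((1 - r * Real.cos θ) * (P θ)^2)
        - r * (Real.sin θ ^ d * (P θ)^d * (P θ * (1 - r * Real.cos θ))⁻¹
          * ((Real.cos θ - r) * (1 - r * Real.cos θ) * (P θ)^3))
        = Real.sin θ ^ d * (P θ)^d * ((1 - r * Real.cos θ) * (P θ)^2)
          - r * (Real.sin θ ^ d * (P θ)^d * ((Real.cos θ - r) * (P θ)^2)) := by
          rw [mul_assoc (Real.sin θ ^ d * (P θ)^d), hinv]
    _ = Real.sin θ ^ d * (P θ)^d := by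
          linear_combination (Real.sin θ ^ d * (P θ)^d) * hpq
            - (Real.sin θ ^ d * (P θ)^d * (P θ)^2) * hqe θ
  -- integrability of the derivative
  have hIntegrand : Continuous fun θ => Real.sin θ ^ d * (Q θ) ^ (-(d:ℝ)/2) :=
    (Real.continuous_sin.pow d).mul (continuous_iff_continuousAt.mpr fun θ =>
      hQc.continuousAt.rpow_const (Or.inl (hQ θ).ne'))
  have hFTC := intervalIntegral.integral_eq_sub_of_hasDeriv_right_of_le Real.pi_pos.le
    hFcont (fun θ hθ => (hFderiv θ hθ).hasDerivWithinAt)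
    (hIntegrand.intervalIntegrable _ _)
  rw [hFTC]
  -- boundary values
  have hQpi : Q π = (1 + r)^2 := by rw [hqe π, Real.cos_pi]; ring
  have hQ0 : Q 0 = (1 - r)^2 := by rw [hqe 0, Real.cos_zero]; ring
  have hPpi : P π = (1 + r)⁻¹ := by
    rw [hPdef]; simp only []
    rw [hQpi, aux_sq_rpow_neg_half (by linarith : (0:ℝ) < 1 + r)]
  have hP0 : P 0 = (1 - r)⁻¹ := by
    rw [hPdef]; simp only []
    rw [hQ0, aux_sq_rpow_neg_half (by linarith : (0:ℝ) < 1 - r)]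
  have hFpi : F π = S π := by
    simp only [hFdef, Real.cos_pi, Real.sin_pi, zero_mul, hPpi]
    rw [show (-1 - r) * (1 + r)⁻¹ = -1 by
      have h' : (1:ℝ) + r ≠ 0 := by intro h; nlinarith
      field_simp
      ring]
    rw [Real.arccos_neg_one]
    simp [hGdef]
  have hF0 : F 0 = 0 := by
    simp only [hFdef, Real.cos_zero, Real.sin_zero, zero_mul, hP0]
    rw [show (1 - r) * (1 - r)⁻¹ = 1 by
      have h' : (1:ℝ) - r ≠ 0 := by intro h; nlinarith
      field_simp]
    rw [Real.arccos_one]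
    simp [hGdef, hSdef]
  rw [hFpi, hF0, sub_zero]

set_option maxHeartbeats 1000000 in
lemma aux_ibp (m : ℕ) {r : ℝ} (h1 : -1 < r) (h2 : r < 1)
    (hQ : ∀ θ : ℝ, 0 < r ^ 2 + 1 - 2 * r * Real.cos θ) :
    (((m:ℝ) + 1) * ∫ θ in (0:ℝ)..π,
        Real.cos θ * Real.sin θ ^ m * (r ^ 2 + 1 - 2 * r * Real.cos θ) ^ (-(m:ℝ)/2))
      = (m:ℝ) * r * ∫ θ in (0:ℝ)..π,
          Real.sin θ ^ (m+2) * (r ^ 2 + 1 - 2 * r * Real.cos θ) ^ (-((m:ℝ)+2)/2) := by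
  set Q : ℝ → ℝ := fun θ => r ^ 2 + 1 - 2 * r * Real.cos θ with hQdef
  have hQ' : ∀ θ, HasDerivAt Q (2 * r * Real.sin θ) θ := by
    intro θ
    have h := ((Real.hasDerivAt_cos θ).const_mul (2 * r)).const_sub (r ^ 2 + 1)
    simpa using h.congr_deriv (by ring)
  have hQc : Continuous Q := by fun_prop
  have hcont : ∀ a : ℝ, Continuous fun θ => (Q θ) ^ (a:ℝ) := fun a =>
    continuous_iff_continuousAt.mpr fun θ => hQc.continuousAt.rpow_const (Or.inl (hQ θ).ne')
  have hF1 : ∀ θ : ℝ, HasDerivAt (fun θ => Real.sin θ ^ (m+1) * (Q θ) ^ (-(m:ℝ)/2))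
      (((m:ℝ) + 1) * (Real.cos θ * Real.sin θ ^ m * (Q θ) ^ (-(m:ℝ)/2))
        - (m:ℝ) * r * (Real.sin θ ^ (m+2) * (Q θ) ^ (-((m:ℝ)+2)/2))) θ := by
    intro θ
    have hsin' : HasDerivAt (fun θ => Real.sin θ ^ (m+1))
        ((↑(m+1)) * Real.sin θ ^ m * Real.cos θ) θ := by
      exact ((hasDerivAt_pow (m+1) (Real.sin θ)).comp θ (Real.hasDerivAt_sin θ)).congr_deriv (by simp)
    have hrp := (hQ' θ).rpow_const (p := -(m:ℝ)/2) (Or.inl (hQ θ).ne')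
    refine (hsin'.mul hrp).congr_deriv ?_
    rw [show (-(m:ℝ)/2 - 1) = -((m:ℝ)+2)/2 by ring]
    push_cast
    ring
  have hi1 : IntervalIntegrable
      (fun θ => Real.cos θ * Real.sin θ ^ m * (Q θ) ^ (-(m:ℝ)/2)) volume 0 π :=
    (((Real.continuous_cos.mul (Real.continuous_sin.pow m)).mul
      (hcont _))).intervalIntegrable _ _
  have hi2 : IntervalIntegrable
      (fun θ => Real.sin θ ^ (m+2) * (Q θ) ^ (-((m:ℝ)+2)/2)) volume 0 π :=
    ((Real.continuous_sin.pow (m+2)).mul (hcont _)).intervalIntegrable _ _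
  have hder : Continuous (fun θ => ((m:ℝ) + 1) * (Real.cos θ * Real.sin θ ^ m * (Q θ) ^ (-(m:ℝ)/2))
      - (m:ℝ) * r * (Real.sin θ ^ (m+2) * (Q θ) ^ (-((m:ℝ)+2)/2))) :=
    (continuous_const.mul ((Real.continuous_cos.mul (Real.continuous_sin.pow m)).mul
      (hcont _))).sub
      (continuous_const.mul ((Real.continuous_sin.pow (m+2)).mul (hcont _)))
  have hFTC := intervalIntegral.integral_eq_sub_of_hasDerivAt (a := (0:ℝ)) (b := π)
    (f := fun θ => Real.sin θ ^ (m+1) * (Q θ) ^ (-(m:ℝ)/2))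
    (fun θ _ => hF1 θ) (hder.intervalIntegrable 0 π)
  rw [intervalIntegral.integral_sub (hi1.const_mul _) (hi2.const_mul _)] at hFTC
  simp only [Real.sin_zero, Real.sin_pi, zero_pow (Nat.succ_ne_zero m), zero_mul,
    sub_zero, sub_self] at hFTC
  rw [intervalIntegral.integral_const_mul, intervalIntegral.integral_const_mul] at hFTC
  exact sub_eq_zero.mp hFTC


/-- The α = 0 kernel is linear on (−1,1). -/
theorem stmt_7 (d : ℕ) (hd : 2 ≤ d) (r : ℝ) (hr : r ∈ Set.Ioo (-1 : ℝ) 1) :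
    (2 * Real.pi ^ (((d : ℝ) - 1) / 2) / Real.Gamma (((d : ℝ) - 1) / 2)) *
      ∫ θ in (0:ℝ)..π,
        Real.cos θ * Real.sin θ ^ (d - 2) /
          (r ^ 2 + 1 - 2 * r * Real.cos θ) ^ (((d : ℝ) - 2) / 2)
    = r * (((d : ℝ) - 2) / (d : ℝ)) *
        (2 * Real.pi ^ ((d : ℝ) / 2) / Real.Gamma ((d : ℝ) / 2)) := by
  obtain ⟨m, rfl⟩ : ∃ m : ℕ, d = m + 2 := ⟨d - 2, by omega⟩
  obtain ⟨h1, h2⟩ := hr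
  -- rewrite the integrand
  have hstep1 : (∫ θ in (0:ℝ)..π,
        Real.cos θ * Real.sin θ ^ (m + 2 - 2) /
          (r ^ 2 + 1 - 2 * r * Real.cos θ) ^ ((((m+2:ℕ) : ℝ) - 2) / 2))
      = ∫ θ in (0:ℝ)..π,
        Real.cos θ * Real.sin θ ^ m * (r ^ 2 + 1 - 2 * r * Real.cos θ) ^ (-(m:ℝ)/2) := by
    refine intervalIntegral.integral_congr fun θ _ => ?_
    rw [show (m + 2 - 2) = m from by omega,
      show ((((m+2:ℕ) : ℝ) - 2) / 2) = (m:ℝ)/2 by push_cast; ring,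
      neg_div, Real.rpow_neg (aux_Qpos h1 h2 θ).le, div_eq_mul_inv]
  rw [hstep1]
  -- apply ibp and key
  have hm1 : ((m:ℝ) + 1) ≠ 0 := by positivity
  have hibp := aux_ibp m h1 h2 (fun θ => aux_Qpos h1 h2 θ)
  have hkey := aux_key (m + 2) h1 h2
  rw [show (-((m+2:ℕ):ℝ)/2) = -((m:ℝ)+2)/2 by push_cast; ring] at hkey
  have hint : (∫ θ in (0:ℝ)..π,
      Real.cos θ * Real.sin θ ^ m * (r ^ 2 + 1 - 2 * r * Real.cos θ) ^ (-(m:ℝ)/2))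
      = (m:ℝ) * r * (∫ t in (0:ℝ)..π, Real.sin t ^ (m+2)) / ((m:ℝ) + 1) := by
    rw [eq_div_iff hm1]
    linear_combination hibp + ((m:ℝ)*r) * hkey
  rw [hint, aux_wallis (m+2)]
  -- Gamma algebra
  set x : ℝ := (m : ℝ) with hxdef
  have hx0 : (0:ℝ) ≤ x := Nat.cast_nonneg m
  have hc1 : (((m+2:ℕ) : ℝ) - 1) / 2 = (x+1)/2 := by push_cast; ring
  have hc2 : ((((m+2:ℕ)) : ℝ) + 1) / 2 = (x+1)/2 + 1 := by push_cast; ring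
  have hc3 : (((m+2:ℕ) : ℝ)) / 2 + 1 = (x/2 + 1) + 1 := by push_cast; ring
  have hc4 : (((m+2:ℕ) : ℝ)) / 2 = x/2 + 1 := by push_cast; ring
  have hc5 : (((m+2:ℕ) : ℝ) - 2) = x := by push_cast; ring
  have hc6 : (((m+2:ℕ) : ℝ)) = x + 2 := by push_cast; ring
  rw [hc1, hc2, hc3, hc4, hc5, hc6]
  rw [Real.Gamma_add_one (by positivity : (x+1)/2 ≠ 0),
    Real.Gamma_add_one (by positivity : x/2 + 1 ≠ 0)]
  have hG1 : 0 < Real.Gamma ((x+1)/2) := Real.Gamma_pos_of_pos (by positivity)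
  have hG2 : 0 < Real.Gamma (x/2 + 1) := Real.Gamma_pos_of_pos (by positivity)
  have hpi : Real.pi ^ ((x+1)/2) * Real.sqrt π = Real.pi ^ (x/2 + 1) := by
    rw [Real.sqrt_eq_rpow, ← Real.rpow_add Real.pi_pos]
    congr 1; ring
  have hpow : (0:ℝ) < Real.pi ^ ((x+1)/2) := Real.rpow_pos_of_pos Real.pi_pos _
  rw [← hpi]
  have hx2 : x + 2 ≠ 0 := by positivity
  have hx1 : x + 1 ≠ 0 := by positivity
  have hx21 : x/2 + 1 ≠ 0 := by positivity
  field_simp
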